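/- arXiv:1709.03678 — 3 statements merged into one kernel-verified Lean document; each statement's English description precedes it below -/
import Mathlib

section
/- The number of maximal independent sets in the path graph P_n satisfies the recurrence a(n) = a(n-2) + a(n-3) for n ≥ 4, with a(1) = 1, a(2) = 2, a(3) = 2. -/
/-- The m×n grid graph on {0,...,m-1}×{0,...,n-1}: edges between points at distance 1. -/
def gridGraph (m n : ℕ) : SimpleGraph (Fin m × Fin n) :=
  SimpleGraph.fromRel (fun u v =>
    (u.1 = v.1 ∧ u.2.1 + 1 = v.2.1) ∨ (u.2 = v.2 ∧ u.1.1 + 1 = v.1.1))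

/-- S is a maximal independent set: independent, and every vertex outside S has a neighbor in S. -/
def IsMaxIndep {V : Type*} (G : SimpleGraph V) (S : Set V) : Prop :=
  (∀ u ∈ S, ∀ v ∈ S, ¬ G.Adj u v) ∧ ∀ v ∉ S, ∃ u ∈ S, G.Adj v u

/-- The number of maximal independent sets of G. -/
noncomputable def numMIS {V : Type*} (G : SimpleGraph V) : ℕ :=
  Nat.card {S : Set V // IsMaxIndep G S}

open scoped Classical

/-- Encoding of MIS strings of the path on `n` vertices. -/
def P (n : ℕ) (f : ℕ → Bool) : Prop :=
  (∀ i, n ≤ i → f i = false) ∧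
  (∀ i, i + 1 < n → f i = true → f (i + 1) = false) ∧
  (∀ i, i < n → f i = false → ∃ j, (j + 1 = i ∨ i + 1 = j) ∧ j < n ∧ f j = true)

noncomputable def enc {n : ℕ} (S : Set (Fin n)) : ℕ → Bool :=
  fun i => if h : i < n then decide ((⟨i, h⟩ : Fin n) ∈ S) else false

lemma enc_eq_true {n : ℕ} (S : Set (Fin n)) (i : ℕ) (h : i < n) :
    enc S i = true ↔ (⟨i, h⟩ : Fin n) ∈ S := by
  simp [enc, h]

noncomputable def misEquiv (n : ℕ) :
    {S : Set (Fin n) // IsMaxIndep (SimpleGraph.pathGraph n) S} ≃ {f : ℕ → Bool // P n f} where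
  toFun S := ⟨enc S.1, by
    obtain ⟨S, hind, hmax⟩ := S
    refine ⟨fun i hi => by simp [enc, Nat.not_lt.mpr hi], fun i hi hfi => ?_, fun i hi hfi => ?_⟩
    · have h1 : i < n := by omega
      rw [enc_eq_true S i h1] at hfi
      by_contra hc
      have hc' : enc S (i + 1) = true := by
        cases h : enc S (i+1) <;> simp_all
      rw [enc_eq_true S (i+1) hi] at hc'
      exact hind _ hfi _ hc' (SimpleGraph.pathGraph_adj.mpr (Or.inl rfl))
    · have hni : (⟨i, hi⟩ : Fin n) ∉ S := fun hm => by
        rw [← enc_eq_true S i hi] at hm; simp_all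
      obtain ⟨u, hu, hadj⟩ := hmax _ hni
      refine ⟨u.1, ?_, u.2, (enc_eq_true S u.1 u.2).mpr (by simpa using hu)⟩
      rcases SimpleGraph.pathGraph_adj.mp hadj with h | h
      · right; exact h
      · left; exact h⟩
  invFun f := ⟨{v : Fin n | f.1 v.1 = true}, by
    obtain ⟨f, hb, hind, hmax⟩ := f
    refine ⟨fun u hu v hv hadj => ?_, fun v hv => ?_⟩
    · rcases SimpleGraph.pathGraph_adj.mp hadj with h | h
      · have := hind u.1 (h ▸ v.2) hu; rw [h] at this; simp_all
      · have := hind v.1 (h ▸ u.2) hv; rw [h] at this; simp_all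
    · have hfv : f v.1 = false := by
        simp only [Set.mem_setOf_eq] at hv; cases h : f v.1 <;> simp_all
      obtain ⟨j, hj, hjn, hfj⟩ := hmax v.1 v.2 hfv
      refine ⟨⟨j, hjn⟩, hfj, SimpleGraph.pathGraph_adj.mpr ?_⟩
      rcases hj with h | h
      · right; exact h
      · left; exact h⟩
  left_inv S := Subtype.ext (by
    ext v
    rw [Set.mem_setOf_eq, enc_eq_true S.1 v.1 v.2])
  right_inv f := by
    apply Subtype.ext
    funext i
    show enc {v : Fin n | f.1 v.1 = true} i = f.1 i
    by_cases h : i < n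
    · simp only [enc, dif_pos h, Set.mem_setOf_eq]
      simp
    · simp only [enc, dif_neg h]
      exact (f.2.1 i (by omega)).symm

lemma numMIS_path (n : ℕ) : numMIS (SimpleGraph.pathGraph n) = Nat.card {f : ℕ → Bool // P n f} :=
  Nat.card_congr (misEquiv n)

instance pFinite (n : ℕ) : Finite {f : ℕ → Bool // P n f} :=
  Finite.of_equiv _ (misEquiv n)

/- Base case n = 1 -/
lemma card_P1 : Nat.card {f : ℕ → Bool // P 1 f} = 1 := by
  have hu : ∀ f : {f : ℕ → Bool // P 1 f}, f.1 = fun i => decide (i = 0) := by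
    rintro ⟨f, hb, _, hmax⟩
    show f = _
    funext i
    rcases Nat.eq_zero_or_pos i with rfl | hi
    · simp only [decide_eq_true_eq]
      by_contra hc
      have hf0 : f 0 = false := by cases h : f 0 <;> simp_all
      obtain ⟨j, hj, hjn, _⟩ := hmax 0 (by omega) hf0
      rcases hj with h | h <;> omega
    · rw [hb i (by omega)]
      have : ¬ i = 0 := by omega
      simp [this]
  have : Nonempty {f : ℕ → Bool // P 1 f} := by
    refine ⟨⟨fun i => decide (i = 0), fun i hi => by simp; omega, fun i hi => by omega,
      fun i hi hf => ?_⟩⟩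
    interval_cases i; simp_all
  rw [Nat.card_eq_one_iff_unique]
  exact ⟨⟨fun a b => Subtype.ext ((hu a).trans (hu b).symm)⟩, this⟩

/- Base case n = 2 -/
lemma card_P2 : Nat.card {f : ℕ → Bool // P 2 f} = 2 := by
  have h10 : P 2 (fun i => decide (i = 0)) := by
    refine ⟨fun i hi => by simp; omega,
      fun i hi hf => by
        have : i = 0 := by simpa using hf
        subst this; simp,
      fun i hi hf => ?_⟩
    simp only [decide_eq_false_iff_not] at hf
    exact ⟨0, by omega, by omega, by simp⟩
  have h01 : P 2 (fun i => decide (i = 1)) := by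
    refine ⟨fun i hi => by simp; omega,
      fun i hi hf => by
        have : i = 1 := by simpa using hf
        omega,
      fun i hi hf => ?_⟩
    simp only [decide_eq_false_iff_not] at hf
    exact ⟨1, by omega, by omega, by simp⟩
  have hdet : ∀ f : ℕ → Bool, P 2 f →
      f = (fun i => if f 0 then decide (i = 0) else decide (i = 1)) := by
    rintro f ⟨hb, hind, hmax⟩
    funext i
    cases h0 : f 0 with
    | true =>
      simp only [if_pos]
      match i with
      | 0 => simp [h0]
      | 1 => have := hind 0 (by omega) h0; simp [this]
      | (k+2) => rw [hb _ (by omega)]; simp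
    | false =>
      simp only [Bool.false_eq_true, if_neg]
      match i with
      | 0 => simp [h0]
      | 1 =>
        obtain ⟨j, hj, hjn, hfj⟩ := hmax 0 (by omega) h0
        have : j = 1 := by omega
        subst this; simp [hfj]
      | (k+2) => rw [hb _ (by omega)]; simp
  have e : {f : ℕ → Bool // P 2 f} ≃ Bool := {
    toFun := fun f => f.1 0
    invFun := fun b => if b then ⟨_, h10⟩ else ⟨_, h01⟩
    left_inv := by
      rintro ⟨f, hf⟩
      have hd := hdet f hf
      cases h0 : f 0 with
      | true =>
        rw [h0] at hd; simp only [if_true] at hd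
        simp only [h0, if_true]
        exact Subtype.ext hd.symm
      | false =>
        rw [h0] at hd
        simp only [Bool.false_eq_true, if_false] at hd
        simp only [h0, Bool.false_eq_true, if_false]
        exact Subtype.ext hd.symm
    right_inv := by rintro (_|_) <;> simp }
  rw [Nat.card_congr e]
  simp

/- Base case n = 3 -/
lemma card_P3 : Nat.card {f : ℕ → Bool // P 3 f} = 2 := by
  have h101 : P 3 (fun i => decide (i = 0 ∨ i = 2)) := by
    refine ⟨fun i hi => by simp; omega,
      fun i hi hf => by
        have hor : i = 0 ∨ i = 2 := by simpa using hf
        have : i = 0 := by omega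
        subst this; simp,
      fun i hi hf => ?_⟩
    simp only [decide_eq_false_iff_not] at hf
    have : i = 1 := by omega
    subst this
    refine ⟨0, by omega, by omega, by simp⟩
  have h010 : P 3 (fun i => decide (i = 1)) := by
    refine ⟨fun i hi => by simp; omega,
      fun i hi hf => by
        have : i = 1 := by simpa using hf
        subst this; simp,
      fun i hi hf => ?_⟩
    simp only [decide_eq_false_iff_not] at hf
    exact ⟨1, by omega, by omega, by simp⟩
  have hdet : ∀ f : ℕ → Bool, P 3 f →
      f = (fun i => if f 0 then decide (i = 0 ∨ i = 2) else decide (i = 1)) := by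
    rintro f ⟨hb, hind, hmax⟩
    funext i
    cases h0 : f 0 with
    | true =>
      have h1 : f 1 = false := hind 0 (by omega) h0
      have h2 : f 2 = true := by
        by_contra hc
        have h2' : f 2 = false := by cases h : f 2 <;> simp_all
        obtain ⟨j, hj, hjn, hfj⟩ := hmax 2 (by omega) h2'
        have : j = 1 := by omega
        subst this; simp_all
      simp only [if_pos]
      match i with
      | 0 => simp [h0]
      | 1 => simp [h1]
      | 2 => simp [h2]
      | (k+3) => rw [hb _ (by omega)]; simp
    | false =>
      have h1 : f 1 = true := by
        obtain ⟨j, hj, hjn, hfj⟩ := hmax 0 (by omega) h0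
        have : j = 1 := by omega
        subst this; exact hfj
      have h2 : f 2 = false := hind 1 (by omega) h1
      simp only [Bool.false_eq_true, if_neg]
      match i with
      | 0 => simp [h0]
      | 1 => simp [h1]
      | 2 => simp [h2]
      | (k+3) => rw [hb _ (by omega)]; simp
  have e : {f : ℕ → Bool // P 3 f} ≃ Bool := {
    toFun := fun f => f.1 0
    invFun := fun b => if b then ⟨_, h101⟩ else ⟨_, h010⟩
    left_inv := by
      rintro ⟨f, hf⟩
      have hd := hdet f hf
      cases h0 : f 0 with
      | true =>
        rw [h0] at hd; simp only [if_true] at hd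
        simp only [h0, if_true]
        exact Subtype.ext hd.symm
      | false =>
        rw [h0] at hd
        simp only [Bool.false_eq_true, if_false] at hd
        simp only [h0, Bool.false_eq_true, if_false]
        exact Subtype.ext hd.symm
    right_inv := by rintro (_|_) <;> simp }
  rw [Nat.card_congr e]
  simp

/- Shift lemmas -/
lemma P_shift2 {n : ℕ} {f : ℕ → Bool} (h4 : 4 ≤ n) (hf : P n f) (h0 : f 0 = true) :
    P (n - 2) (fun i => f (i + 2)) := by
  obtain ⟨hb, hind, hmax⟩ := hf
  refine ⟨fun i hi => hb _ (by omega), fun i hi hfi => by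
      have := hind (i + 2) (by omega) hfi
      simpa [show i + 2 + 1 = i + 3 by omega] using this,
    fun i hi hfi => ?_⟩
  obtain ⟨j, hj, hjn, hfj⟩ := hmax (i + 2) (by omega) hfi
  rcases hj with h | h
  · -- j + 1 = i + 2, j = i + 1
    rcases Nat.eq_zero_or_pos i with rfl | hip
    · -- j = 1, but f 0 = true and indep gives f 1 = false
      have : j = 1 := by omega
      subst this
      have := hind 0 (by omega) h0
      simp_all
    · refine ⟨i - 1, Or.inl (by omega), by omega, ?_⟩
      show f (i - 1 + 2) = true
      have : i - 1 + 2 = j := by omega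
      rw [this]; exact hfj
  · refine ⟨i + 1, Or.inr rfl, by omega, ?_⟩
    show f (i + 1 + 2) = true
    have : i + 1 + 2 = j := by omega
    rw [this]; exact hfj

lemma f1_true {n : ℕ} {f : ℕ → Bool} (h2 : 2 ≤ n) (hf : P n f) (h0 : f 0 = false) :
    f 1 = true := by
  obtain ⟨j, hj, hjn, hfj⟩ := hf.2.2 0 (by omega) h0
  have : j = 1 := by omega
  subst this; exact hfj

lemma P_shift3 {n : ℕ} {f : ℕ → Bool} (h4 : 4 ≤ n) (hf : P n f) (h0 : f 0 = false) :
    P (n - 3) (fun i => f (i + 3)) := by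
  have h1 : f 1 = true := f1_true (by omega) hf h0
  obtain ⟨hb, hind, hmax⟩ := hf
  have h2 : f 2 = false := by
    have := hind 1 (by omega) h1; simpa using this
  refine ⟨fun i hi => hb _ (by omega), fun i hi hfi => by
      have := hind (i + 3) (by omega) hfi
      simpa [show i + 3 + 1 = i + 4 by omega] using this,
    fun i hi hfi => ?_⟩
  obtain ⟨j, hj, hjn, hfj⟩ := hmax (i + 3) (by omega) hfi
  rcases hj with h | h
  · rcases Nat.eq_zero_or_pos i with rfl | hip
    · have : j = 2 := by omega
      subst this; simp_all
    · refine ⟨i - 1, Or.inl (by omega), by omega, ?_⟩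
      show f (i - 1 + 3) = true
      have : i - 1 + 3 = j := by omega
      rw [this]; exact hfj
  · refine ⟨i + 1, Or.inr rfl, by omega, ?_⟩
    show f (i + 1 + 3) = true
    have : i + 1 + 3 = j := by omega
    rw [this]; exact hfj

/- Unshift (cons) constructions -/
def cons2 (g : ℕ → Bool) : ℕ → Bool :=
  fun i => if i = 0 then true else if i = 1 then false else g (i - 2)

def cons3 (g : ℕ → Bool) : ℕ → Bool :=
  fun i => if i = 1 then true else if i ≤ 2 then false else g (i - 3)

lemma P_cons2 {n : ℕ} {g : ℕ → Bool} (h4 : 4 ≤ n) (hg : P (n - 2) g) : P n (cons2 g) := by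
  obtain ⟨hb, hind, hmax⟩ := hg
  refine ⟨fun i hi => ?_, fun i hi hfi => ?_, fun i hi hfi => ?_⟩
  · simp only [cons2, if_neg (by omega : ¬ i = 0), if_neg (by omega : ¬ i = 1)]
    exact hb _ (by omega)
  · match i with
    | 0 => simp [cons2]
    | 1 => simp [cons2] at hfi
    | (k + 2) =>
      simp only [cons2, if_neg (by omega : ¬ k + 2 = 0), if_neg (by omega : ¬ k + 2 = 1),
        if_neg (by omega : ¬ k + 2 + 1 = 0), if_neg (by omega : ¬ k + 2 + 1 = 1)] at hfi ⊢
      have := hind k (by omega) (by simpa using hfi)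
      simpa [show k + 2 + 1 - 2 = k + 1 by omega, show k + 2 - 2 = k by omega] using this
  · match i with
    | 0 => simp [cons2] at hfi
    | 1 => exact ⟨0, Or.inl rfl, by omega, by simp [cons2]⟩
    | (k + 2) =>
      simp only [cons2, if_neg (by omega : ¬ k + 2 = 0), if_neg (by omega : ¬ k + 2 = 1),
        show k + 2 - 2 = k by omega] at hfi
      obtain ⟨j, hj, hjn, hfj⟩ := hmax k (by omega) hfi
      refine ⟨j + 2, by omega, by omega, ?_⟩
      simp only [cons2, if_neg (by omega : ¬ j + 2 = 0), if_neg (by omega : ¬ j + 2 = 1),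
        show j + 2 - 2 = j by omega]
      exact hfj

lemma P_cons3 {n : ℕ} {g : ℕ → Bool} (h4 : 4 ≤ n) (hg : P (n - 3) g) : P n (cons3 g) := by
  obtain ⟨hb, hind, hmax⟩ := hg
  refine ⟨fun i hi => ?_, fun i hi hfi => ?_, fun i hi hfi => ?_⟩
  · simp only [cons3, if_neg (by omega : ¬ i = 1), if_neg (by omega : ¬ i ≤ 2)]
    exact hb _ (by omega)
  · match i with
    | 0 => simp [cons3] at hfi
    | 1 => simp [cons3]
    | 2 => simp [cons3] at hfi
    | (k + 3) =>
      simp only [cons3, if_neg (by omega : ¬ k + 3 = 1), if_neg (by omega : ¬ k + 3 ≤ 2),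
        if_neg (by omega : ¬ k + 3 + 1 = 1), if_neg (by omega : ¬ k + 3 + 1 ≤ 2)] at hfi ⊢
      have := hind k (by omega) (by simpa [show k + 3 - 3 = k by omega] using hfi)
      simpa [show k + 3 + 1 - 3 = k + 1 by omega] using this
  · match i with
    | 0 => exact ⟨1, Or.inr rfl, by omega, by simp [cons3]⟩
    | 1 => simp [cons3] at hfi
    | 2 => exact ⟨1, Or.inl rfl, by omega, by simp [cons3]⟩
    | (k + 3) =>
      simp only [cons3, if_neg (by omega : ¬ k + 3 = 1), if_neg (by omega : ¬ k + 3 ≤ 2),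
        show k + 3 - 3 = k by omega] at hfi
      obtain ⟨j, hj, hjn, hfj⟩ := hmax k (by omega) hfi
      refine ⟨j + 3, by omega, by omega, ?_⟩
      simp only [cons3, if_neg (by omega : ¬ j + 3 = 1), if_neg (by omega : ¬ j + 3 ≤ 2),
        show j + 3 - 3 = j by omega]
      exact hfj

/- The splitting equivalence -/
noncomputable def splitEquiv (n : ℕ) (h4 : 4 ≤ n) :
    {f : ℕ → Bool // P n f} ≃ {f : ℕ → Bool // P (n - 2) f} ⊕ {f : ℕ → Bool // P (n - 3) f} where
  toFun f :=
    if h0 : f.1 0 = true then Sum.inl ⟨fun i => f.1 (i + 2), P_shift2 h4 f.2 h0⟩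
    else Sum.inr ⟨fun i => f.1 (i + 3),
      P_shift3 h4 f.2 (by cases h : f.1 0 <;> simp_all)⟩
  invFun x := x.elim (fun g => ⟨cons2 g.1, P_cons2 h4 g.2⟩) (fun g => ⟨cons3 g.1, P_cons3 h4 g.2⟩)
  left_inv := by
    rintro ⟨f, hf⟩
    by_cases h0 : f 0 = true
    · simp only [dif_pos h0, Sum.elim_inl]
      apply Subtype.ext
      funext i
      match i with
      | 0 => simp [cons2, h0]
      | 1 =>
        have h1 : f 1 = false := hf.2.1 0 (by omega) h0
        simp [cons2, h1]
      | (k + 2) =>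
        simp [cons2, show k + 2 - 2 = k by omega]
    · have h0' : f 0 = false := by cases h : f 0 <;> simp_all
      have h1 : f 1 = true := f1_true (by omega) hf h0'
      have h2 : f 2 = false := by
        have := hf.2.1 1 (by omega) h1; simpa using this
      simp only [dif_neg h0, Sum.elim_inr]
      apply Subtype.ext
      funext i
      match i with
      | 0 => simp [cons3, h0']
      | 1 => simp [cons3, h1]
      | 2 => simp [cons3, h2]
      | (k + 3) =>
        simp [cons3, show k + 3 - 3 = k by omega, (by omega : ¬ k + 3 = 1),
          (by omega : ¬ k + 3 ≤ 2)]
  right_inv := by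
    rintro (⟨g, hg⟩ | ⟨g, hg⟩)
    · simp only [Sum.elim_inl]
      simp only [show cons2 g 0 = true by simp [cons2], ↓reduceDIte]
      exact congrArg Sum.inl (Subtype.ext (funext fun i => by
        simp [cons2, show i + 2 - 2 = i by omega]))
    · simp only [Sum.elim_inr]
      simp only [show cons3 g 0 = false by simp [cons3], Bool.false_eq_true, ↓reduceDIte]
      exact congrArg Sum.inr (Subtype.ext (funext fun i => by
        simp [cons3, show i + 3 - 3 = i by omega, (by omega : ¬ i + 3 = 1),
          (by omega : ¬ i + 3 ≤ 2)]))

theorem mis_path_recurrence :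
    numMIS (SimpleGraph.pathGraph 1) = 1 ∧
    numMIS (SimpleGraph.pathGraph 2) = 2 ∧
    numMIS (SimpleGraph.pathGraph 3) = 2 ∧
    ∀ n : ℕ, 4 ≤ n →
      numMIS (SimpleGraph.pathGraph n) =
        numMIS (SimpleGraph.pathGraph (n - 2)) + numMIS (SimpleGraph.pathGraph (n - 3)) := by
  refine ⟨by rw [numMIS_path]; exact card_P1, by rw [numMIS_path]; exact card_P2,
    by rw [numMIS_path]; exact card_P3, fun n hn => ?_⟩
  rw [numMIS_path, numMIS_path, numMIS_path, Nat.card_congr (splitEquiv n hn), Nat.card_sum]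
end

section
/- For all positive integers m₁, m₂, n, the number of maximal independent sets satisfies the supermultiplicativity inequality σ(Z_{m₁×n}) · σ(Z_{m₂×n}) ≤ σ(Z_{(m₁+m₂+1)×n}). -/
/-- Any independent set in a finite graph extends to a maximal independent set. -/
lemma exists_maxIndep_superset {V : Type*} [Finite V] (G : SimpleGraph V)
    (S₀ : Set V) (h : ∀ u ∈ S₀, ∀ v ∈ S₀, ¬ G.Adj u v) :
    ∃ S, S₀ ⊆ S ∧ IsMaxIndep G S := by
  classical
  set 𝒮 : Set (Set V) := {T | S₀ ⊆ T ∧ ∀ u ∈ T, ∀ v ∈ T, ¬ G.Adj u v} with h𝒮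
  have hfin : 𝒮.Finite := Set.toFinite _
  have hne : 𝒮.Nonempty := ⟨S₀, subset_rfl, h⟩
  obtain ⟨T, hT, hmax⟩ : ∃ T ∈ 𝒮, ∀ T' ∈ 𝒮, id T ≤ id T' → id T = id T' := by
    obtain ⟨T, hT, hmax⟩ := Set.Finite.exists_maximalFor id 𝒮 hfin hne
    exact ⟨T, hT, fun T' h1 h2 => le_antisymm h2 (hmax h1 h2)⟩
  refine ⟨T, hT.1, hT.2, ?_⟩
  intro v hv
  by_contra hcon
  push_neg at hcon
  have hT' : insert v T ∈ 𝒮 := by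
    refine ⟨hT.1.trans (Set.subset_insert _ _), ?_⟩
    intro a ha b hb
    rcases ha with rfl | ha
    · rcases hb with rfl | hb
      · exact G.irrefl
      · exact hcon b hb
    · rcases hb with rfl | hb
      · intro hadj; exact hcon a ha hadj.symm
      · exact hT.2 a ha b hb
  have heq := hmax _ hT' (Set.subset_insert _ _)
  simp only [id] at heq
  exact hv (heq ▸ Set.mem_insert v T)

/-- Embed the first grid into the big grid. -/
def emb1 (m₁ m₂ n : ℕ) (p : Fin m₁ × Fin n) : Fin (m₁ + m₂ + 1) × Fin n :=
  (⟨p.1.1, by have := p.1.isLt; omega⟩, p.2)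

/-- Embed the second grid into the big grid (offset by m₁ + 1). -/
def emb2 (m₁ m₂ n : ℕ) (p : Fin m₂ × Fin n) : Fin (m₁ + m₂ + 1) × Fin n :=
  (⟨m₁ + 1 + p.1.1, by have := p.1.isLt; omega⟩, p.2)

lemma adj_emb1 {m₁ m₂ n : ℕ} (u v : Fin m₁ × Fin n) :
    (gridGraph (m₁ + m₂ + 1) n).Adj (emb1 m₁ m₂ n u) (emb1 m₁ m₂ n v) ↔
      (gridGraph m₁ n).Adj u v := by
  simp only [gridGraph, SimpleGraph.fromRel_adj, emb1, ne_eq, Prod.mk.injEq, Prod.ext_iff,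
    Fin.ext_iff, Fin.mk.injEq]

lemma adj_emb2 {m₁ m₂ n : ℕ} (u v : Fin m₂ × Fin n) :
    (gridGraph (m₁ + m₂ + 1) n).Adj (emb2 m₁ m₂ n u) (emb2 m₁ m₂ n v) ↔
      (gridGraph m₂ n).Adj u v := by
  simp only [gridGraph, SimpleGraph.fromRel_adj, emb2, ne_eq, Prod.mk.injEq, Prod.ext_iff,
    Fin.ext_iff, Fin.mk.injEq]
  omega

lemma not_adj_emb1_emb2 {m₁ m₂ n : ℕ} (u : Fin m₁ × Fin n) (v : Fin m₂ × Fin n) :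
    ¬ (gridGraph (m₁ + m₂ + 1) n).Adj (emb1 m₁ m₂ n u) (emb2 m₁ m₂ n v) := by
  have hu := u.1.isLt
  simp only [gridGraph, SimpleGraph.fromRel_adj, emb1, emb2, ne_eq, Prod.mk.injEq, Prod.ext_iff,
    Fin.ext_iff, Fin.mk.injEq]
  omega

theorem mis_supermultiplicative (m₁ m₂ n : ℕ) (hm₁ : 0 < m₁) (hm₂ : 0 < m₂) (hn : 0 < n) :
    numMIS (gridGraph m₁ n) * numMIS (gridGraph m₂ n) ≤ numMIS (gridGraph (m₁ + m₂ + 1) n) := by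
  classical
  have key : ∀ (S₁ : Set (Fin m₁ × Fin n)) (S₂ : Set (Fin m₂ × Fin n)),
      IsMaxIndep (gridGraph m₁ n) S₁ → IsMaxIndep (gridGraph m₂ n) S₂ →
      ∃ S, IsMaxIndep (gridGraph (m₁ + m₂ + 1) n) S ∧
        emb1 m₁ m₂ n ⁻¹' S = S₁ ∧ emb2 m₁ m₂ n ⁻¹' S = S₂ := by
    intro S₁ S₂ h₁ h₂
    set S₀ : Set (Fin (m₁ + m₂ + 1) × Fin n) :=
      emb1 m₁ m₂ n '' S₁ ∪ emb2 m₁ m₂ n '' S₂ with hS₀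
    have hind : ∀ u ∈ S₀, ∀ v ∈ S₀, ¬ (gridGraph (m₁ + m₂ + 1) n).Adj u v := by
      rintro u (⟨a, ha, rfl⟩ | ⟨a, ha, rfl⟩) v (⟨b, hb, rfl⟩ | ⟨b, hb, rfl⟩)
      · rw [adj_emb1]; exact h₁.1 a ha b hb
      · exact not_adj_emb1_emb2 a b
      · intro hadj; exact not_adj_emb1_emb2 b a hadj.symm
      · rw [adj_emb2]; exact h₂.1 a ha b hb
    obtain ⟨S, hsub, hS⟩ := exists_maxIndep_superset _ S₀ hind
    refine ⟨S, hS, ?_, ?_⟩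
    · ext v
      constructor
      · intro hv
        by_contra hcon
        obtain ⟨u, hu, hadj⟩ := h₁.2 v hcon
        exact hS.1 _ hv _ (hsub (Or.inl ⟨u, hu, rfl⟩)) ((adj_emb1 v u).mpr hadj)
      · intro hv
        exact hsub (Or.inl ⟨v, hv, rfl⟩)
    · ext v
      constructor
      · intro hv
        by_contra hcon
        obtain ⟨u, hu, hadj⟩ := h₂.2 v hcon
        exact hS.1 _ hv _ (hsub (Or.inr ⟨u, hu, rfl⟩)) ((adj_emb2 v u).mpr hadj)
      · intro hv
        exact hsub (Or.inr ⟨v, hv, rfl⟩)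
  set f : {S // IsMaxIndep (gridGraph m₁ n) S} × {S // IsMaxIndep (gridGraph m₂ n) S} →
      {S // IsMaxIndep (gridGraph (m₁ + m₂ + 1) n) S} :=
    fun p => ⟨(key p.1.1 p.2.1 p.1.2 p.2.2).choose, (key p.1.1 p.2.1 p.1.2 p.2.2).choose_spec.1⟩
    with hf
  have hinj : Function.Injective f := by
    intro p q h
    have hp := (key p.1.1 p.2.1 p.1.2 p.2.2).choose_spec
    have hq := (key q.1.1 q.2.1 q.1.2 q.2.2).choose_spec
    have hval : (key p.1.1 p.2.1 p.1.2 p.2.2).choose = (key q.1.1 q.2.1 q.1.2 q.2.2).choose :=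
      congrArg Subtype.val h
    have h1 : p.1.1 = q.1.1 := by rw [← hp.2.1, ← hq.2.1, hval]
    have h2 : p.2.1 = q.2.1 := by rw [← hp.2.2, ← hq.2.2, hval]
    exact Prod.ext (Subtype.ext h1) (Subtype.ext h2)
  calc numMIS (gridGraph m₁ n) * numMIS (gridGraph m₂ n)
      = Nat.card ({S // IsMaxIndep (gridGraph m₁ n) S} ×
          {S // IsMaxIndep (gridGraph m₂ n) S}) := (Nat.card_prod _ _).symm
    _ ≤ numMIS (gridGraph (m₁ + m₂ + 1) n) := Nat.card_le_card_of_injective f hinj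
end

section
/- (Two-dimensional Fekete lemma) Let (a_{m,n})_{m,n≥1} be a double sequence of real numbers with a_{m,n} ≥ 1 for all m,n, satisfying a_{m₁,n} · a_{m₂,n} ≤ a_{m₁+m₂+1,n} and a_{m,n₁} · a_{m,n₂} ≤ a_{m,n₁+n₂+1} for all indices. If sup_{m,n≥1} a_{m,n}^{1/((m+1)(n+1))} is finite, then the limit of a_{m,n}^{1/(mn)} as m,n → ∞ exists and equals sup_{m,n≥1} a_{m,n}^{1/((m+1)(n+1))}. -/
open Real


lemma fk_exists_rpow_lt {L C : ℝ} (hL : 0 < L) (hC : 1 < C) :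
    ∃ δ : ℝ, 0 < δ ∧ δ ≤ 1 ∧ L ^ δ < C := by
  have hcont : ContinuousAt (fun t : ℝ => L ^ t) 0 := by
    have heq : (fun t : ℝ => L ^ t) = fun t => Real.exp (Real.log L * t) := by
      funext t; rw [Real.rpow_def_of_pos hL]
    rw [heq]
    exact (Real.continuous_exp.comp (continuous_const.mul continuous_id)).continuousAt
  have hmem : (fun t : ℝ => L ^ t) ⁻¹' (Set.Iio C) ∈ nhds (0 : ℝ) := by
    apply hcont
    have : (fun t : ℝ => L ^ t) 0 = 1 := Real.rpow_zero L
    rw [this]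
    exact Iio_mem_nhds hC
  obtain ⟨r, hr, hball⟩ := Metric.mem_nhds_iff.mp hmem
  refine ⟨min (r / 2) 1, by positivity, min_le_right _ _, ?_⟩
  apply hball
  simp only [Metric.mem_ball, Real.dist_eq, sub_zero]
  rw [abs_of_pos (by positivity)]
  calc min (r / 2) 1 ≤ r / 2 := min_le_left _ _
    _ < r := by linarith

section

variable (a : ℕ → ℕ → ℝ)
    (h1 : ∀ m n : ℕ, 1 ≤ m → 1 ≤ n → 1 ≤ a m n)
    (h2 : ∀ m₁ m₂ n : ℕ, 1 ≤ m₁ → 1 ≤ m₂ → 1 ≤ n →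
      a m₁ n * a m₂ n ≤ a (m₁ + m₂ + 1) n)
    (h3 : ∀ m n₁ n₂ : ℕ, 1 ≤ m → 1 ≤ n₁ → 1 ≤ n₂ →
      a m n₁ * a m n₂ ≤ a m (n₁ + n₂ + 1))

include h1 h2 in
lemma fk_pow_row (p n : ℕ) (hp : 1 ≤ p) (hn : 1 ≤ n) :
    ∀ k : ℕ, 1 ≤ k → a p n ^ k ≤ a (k * (p + 1) - 1) n := by
  intro k hk
  induction k with
  | zero => omega
  | succ k ih =>
    rcases Nat.eq_or_lt_of_le hk with h | h
    · simp [← h]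
    · have hk1 : 1 ≤ k := by omega
      have hkp : 1 ≤ k * (p + 1) := Nat.one_le_iff_ne_zero.mpr (by positivity)
      have hkp1 : 1 ≤ k * (p + 1) - 1 := by
        have : 2 ≤ k * (p + 1) := le_trans (by omega) (Nat.mul_le_mul hk1 le_rfl)
        omega
      calc a p n ^ (k + 1) = a p n ^ k * a p n := pow_succ _ _
        _ ≤ a (k * (p + 1) - 1) n * a p n := by
            apply mul_le_mul_of_nonneg_right (ih hk1)
            linarith [h1 p n hp hn]
        _ ≤ a ((k * (p + 1) - 1) + p + 1) n := h2 _ _ _ hkp1 hp hn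
        _ = a ((k + 1) * (p + 1) - 1) n := by
            congr 1
            have hKe : (k + 1) * (p + 1) = k * (p + 1) + (p + 1) := by ring
            set K := k * (p + 1)
            omega

include h1 h3 in
lemma fk_pow_col (m q : ℕ) (hm : 1 ≤ m) (hq : 1 ≤ q) :
    ∀ l : ℕ, 1 ≤ l → a m q ^ l ≤ a m (l * (q + 1) - 1) := by
  intro l hl
  induction l with
  | zero => omega
  | succ l ih =>
    rcases Nat.eq_or_lt_of_le hl with h | h
    · simp [← h]
    · have hl1 : 1 ≤ l := by omega
      have hlq1 : 1 ≤ l * (q + 1) - 1 := by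
        have : 2 ≤ l * (q + 1) := le_trans (by omega) (Nat.mul_le_mul hl1 le_rfl)
        omega
      calc a m q ^ (l + 1) = a m q ^ l * a m q := pow_succ _ _
        _ ≤ a m (l * (q + 1) - 1) * a m q := by
            apply mul_le_mul_of_nonneg_right (ih hl1)
            linarith [h1 m q hm hq]
        _ ≤ a m ((l * (q + 1) - 1) + q + 1) := h3 _ _ _ hm hlq1 hq
        _ = a m ((l + 1) * (q + 1) - 1) := by
            congr 1
            have hKe : (l + 1) * (q + 1) = l * (q + 1) + (q + 1) := by ring
            set K := l * (q + 1)
            omega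

include h1 h2 h3 in
lemma fk_pow_combined (p q k l : ℕ) (hp : 1 ≤ p) (hq : 1 ≤ q) (hk : 1 ≤ k) (hl : 1 ≤ l) :
    a p q ^ (k * l) ≤ a (k * (p + 1) - 1) (l * (q + 1) - 1) := by
  have hm1 : 1 ≤ k * (p + 1) - 1 := by
    have : 2 ≤ k * (p + 1) := le_trans (by omega) (Nat.mul_le_mul hk le_rfl)
    omega
  have h0 : 0 ≤ a p q := by linarith [h1 p q hp hq]
  calc a p q ^ (k * l) = (a p q ^ k) ^ l := pow_mul _ _ _
    _ ≤ (a (k * (p + 1) - 1) q) ^ l := by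
        apply pow_le_pow_left₀ (pow_nonneg h0 _) (fk_pow_row a h1 h2 p q hp hq k hk)
    _ ≤ a (k * (p + 1) - 1) (l * (q + 1) - 1) :=
        fk_pow_col a h1 h3 _ q hm1 hq l hl

include h1 h2 in
lemma fk_mono_row (m d n : ℕ) (hm : 1 ≤ m) (hd : 1 ≤ d) (hn : 1 ≤ n) :
    a m n ≤ a (m + d + 1) n := by
  have := h2 m d n hm hd hn
  have hd1 := h1 d n hd hn
  have hm1 := h1 m n hm hn
  nlinarith

include h1 h3 in
lemma fk_mono_col (m d n : ℕ) (hm : 1 ≤ m) (hd : 1 ≤ d) (hn : 1 ≤ n) :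
    a m n ≤ a m (n + d + 1) := by
  have := h3 m n d hm hn hd
  have hd1 := h1 m d hm hd
  have hm1 := h1 m n hm hn
  nlinarith

include h1 h2 h3 in
lemma fk_key (p q m n : ℕ) (hp : 1 ≤ p) (hq : 1 ≤ q)
    (hmp : p + 2 ≤ m) (hnq : q + 2 ≤ n) :
    ∃ k l : ℕ, 1 ≤ k ∧ 1 ≤ l ∧ m ≤ k * (p + 1) + 2 * (p + 1) ∧
      n ≤ l * (q + 1) + 2 * (q + 1) ∧ a p q ^ (k * l) ≤ a m n := by
  set k := (m - 1) / (p + 1) with hkdef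
  set l := (n - 1) / (q + 1) with hldef
  have hK1 : k * (p + 1) + (m - 1) % (p + 1) = m - 1 := by
    rw [mul_comm]; exact Nat.div_add_mod _ _
  have hrle : (m - 1) % (p + 1) ≤ p := by
    have := Nat.mod_lt (m - 1) (show 0 < p + 1 by omega); omega
  have hL1 : l * (q + 1) + (n - 1) % (q + 1) = n - 1 := by
    rw [mul_comm]; exact Nat.div_add_mod _ _
  have hsle : (n - 1) % (q + 1) ≤ q := by
    have := Nat.mod_lt (n - 1) (show 0 < q + 1 by omega); omega
  have hk1 : 1 ≤ k := (Nat.one_le_div_iff (by omega)).mpr (by omega)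
  have hl1 : 1 ≤ l := (Nat.one_le_div_iff (by omega)).mpr (by omega)
  clear_value k l
  have hK2 : 2 ≤ k * (p + 1) := by
    have : 1 * 2 ≤ k * (p + 1) := Nat.mul_le_mul hk1 (by omega)
    omega
  have hM2 : 2 ≤ l * (q + 1) := by
    have : 1 * 2 ≤ l * (q + 1) := Nat.mul_le_mul hl1 (by omega)
    omega
  refine ⟨k, l, hk1, hl1, by omega, by omega, ?_⟩
  have key : a p q ^ (k * l) ≤ a (k * (p + 1) - 1) (l * (q + 1) - 1) :=
    fk_pow_combined a h1 h2 h3 p q k l hp hq hk1 hl1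
  have hs1 : a (k * (p + 1) - 1) (l * (q + 1) - 1) ≤ a m (l * (q + 1) - 1) := by
    have h := fk_mono_row a h1 h2 (k * (p + 1) - 1) (m - k * (p + 1)) (l * (q + 1) - 1)
      (by omega) (by omega) (by omega)
    have hrw : (k * (p + 1) - 1) + (m - k * (p + 1)) + 1 = m := by omega
    rwa [hrw] at h
  have hs2 : a m (l * (q + 1) - 1) ≤ a m n := by
    have h := fk_mono_col a h1 h3 m (n - l * (q + 1)) (l * (q + 1) - 1)
      (by omega) (by omega) (by omega)
    have hrw : (l * (q + 1) - 1) + (n - l * (q + 1)) + 1 = n := by omega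
    rwa [hrw] at h
  exact le_trans key (le_trans hs1 hs2)


end

set_option maxHeartbeats 1600000 in
theorem fekete_two_dim (a : ℕ → ℕ → ℝ)
    (h1 : ∀ m n : ℕ, 1 ≤ m → 1 ≤ n → 1 ≤ a m n)
    (h2 : ∀ m₁ m₂ n : ℕ, 1 ≤ m₁ → 1 ≤ m₂ → 1 ≤ n →
      a m₁ n * a m₂ n ≤ a (m₁ + m₂ + 1) n)
    (h3 : ∀ m n₁ n₂ : ℕ, 1 ≤ m → 1 ≤ n₁ → 1 ≤ n₂ →
      a m n₁ * a m n₂ ≤ a m (n₁ + n₂ + 1))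
    (hbdd : BddAbove {x : ℝ | ∃ m n : ℕ, 1 ≤ m ∧ 1 ≤ n ∧
      x = a m n ^ ((1 : ℝ) / ((m + 1) * (n + 1)))}) :
    ∀ ε > (0 : ℝ), ∃ N : ℕ, ∀ m n : ℕ, N ≤ m → N ≤ n →
      |a m n ^ ((1 : ℝ) / (m * n)) -
        sSup {x : ℝ | ∃ m' n' : ℕ, 1 ≤ m' ∧ 1 ≤ n' ∧
          x = a m' n' ^ ((1 : ℝ) / ((m' + 1) * (n' + 1)))}| < ε := by
  intro ε hε
  set S := {x : ℝ | ∃ m' n' : ℕ, 1 ≤ m' ∧ 1 ≤ n' ∧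
      x = a m' n' ^ ((1 : ℝ) / ((m' + 1) * (n' + 1)))} with hSdef
  set L := sSup S with hLdef
  have one_le_rpow : ∀ x z : ℝ, 1 ≤ x → 0 ≤ z → 1 ≤ x ^ z := by
    intro x z hx hz
    calc (1 : ℝ) = 1 ^ z := (Real.one_rpow z).symm
      _ ≤ x ^ z := Real.rpow_le_rpow (by norm_num) hx hz
  have hSne : S.Nonempty := ⟨a 1 1 ^ ((1 : ℝ) / (((1:ℕ) + 1) * ((1:ℕ) + 1))), 1, 1, le_rfl, le_rfl, rfl⟩
  have hL1 : 1 ≤ L := by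
    have hmem : a 1 1 ^ ((1 : ℝ) / (((1:ℕ) + 1) * ((1:ℕ) + 1))) ∈ S := ⟨1, 1, le_rfl, le_rfl, rfl⟩
    have := le_csSup hbdd hmem
    have h11 : (1:ℝ) ≤ a 1 1 ^ ((1 : ℝ) / (((1:ℕ) + 1) * ((1:ℕ) + 1))) :=
      one_le_rpow _ _ (h1 1 1 le_rfl le_rfl) (by norm_num)
    linarith
  have hLpos : 0 < L := by linarith
  -- upper bound
  have hupper : ∃ N₁ : ℕ, 1 ≤ N₁ ∧ ∀ m n : ℕ, N₁ ≤ m → N₁ ≤ n →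
      a m n ^ ((1 : ℝ) / (m * n)) < L + ε := by
    obtain ⟨δ, hδ0, hδ1, hδC⟩ := fk_exists_rpow_lt hLpos
      (show 1 < (L + ε) / L by rw [lt_div_iff₀ hLpos]; linarith)
    refine ⟨max 1 ⌈3 / δ⌉₊, le_max_left _ _, ?_⟩
    intro m n hm hn
    have hm1 : 1 ≤ m := le_trans (le_max_left _ _) hm
    have hn1 : 1 ≤ n := le_trans (le_max_left _ _) hn
    have hm0 : (0:ℝ) < m := by exact_mod_cast hm1
    have hn0 : (0:ℝ) < n := by exact_mod_cast hn1
    have hmδ : 3 ≤ δ * m := by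
      have : (3 / δ : ℝ) ≤ m := by
        have := le_trans (le_max_right 1 ⌈3 / δ⌉₊) hm
        exact_mod_cast Nat.ceil_le.mp this
      calc (3:ℝ) = δ * (3 / δ) := by field_simp
        _ ≤ δ * m := by apply mul_le_mul_of_nonneg_left this hδ0.le
    have hnδ : 3 ≤ δ * n := by
      have : (3 / δ : ℝ) ≤ n := by
        have := le_trans (le_max_right 1 ⌈3 / δ⌉₊) hn
        exact_mod_cast Nat.ceil_le.mp this
      calc (3:ℝ) = δ * (3 / δ) := by field_simp
        _ ≤ δ * n := by apply mul_le_mul_of_nonneg_left this hδ0.le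
    have ha0 : 0 ≤ a m n := by linarith [h1 m n hm1 hn1]
    have hmem : a m n ^ ((1 : ℝ) / ((m + 1) * (n + 1))) ∈ S := ⟨m, n, hm1, hn1, rfl⟩
    have hle : a m n ^ ((1 : ℝ) / ((m + 1) * (n + 1))) ≤ L := le_csSup hbdd hmem
    set t : ℝ := ((m:ℝ) + 1) * ((n:ℝ) + 1) / ((m:ℝ) * n) with ht
    have ht0 : 0 ≤ t := by positivity
    have htle : t ≤ 1 + δ := by
      rw [ht, div_le_iff₀ (by positivity)]
      have key1 : 3 * (n:ℝ) ≤ δ * m * n := by nlinarith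
      have key2 : 3 * (m:ℝ) ≤ δ * m * n := by nlinarith
      nlinarith
    have hstep : a m n ^ ((1 : ℝ) / (m * n)) =
        (a m n ^ ((1 : ℝ) / ((m + 1) * (n + 1)))) ^ t := by
      rw [← Real.rpow_mul ha0]
      congr 1
      rw [ht]
      field_simp
    rw [hstep]
    calc (a m n ^ ((1 : ℝ) / ((m + 1) * (n + 1)))) ^ t ≤ L ^ t :=
          Real.rpow_le_rpow (Real.rpow_nonneg ha0 _) hle ht0
      _ ≤ L ^ (1 + δ) := Real.rpow_le_rpow_of_exponent_le hL1 htle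
      _ = L * L ^ δ := by rw [Real.rpow_add hLpos, Real.rpow_one]
      _ < L * ((L + ε) / L) := by apply mul_lt_mul_of_pos_left hδC hLpos
      _ = L + ε := by field_simp
  -- lower bound
  have hlower : ∃ N₂ : ℕ, ∀ m n : ℕ, N₂ ≤ m → N₂ ≤ n →
      L - ε < a m n ^ ((1 : ℝ) / (m * n)) := by
    by_cases hcase : L - ε < 1
    · refine ⟨1, fun m n hm hn => ?_⟩
      have := one_le_rpow (a m n) ((1:ℝ)/(m*n)) (h1 m n hm hn) (by positivity)
      linarith
    · push_neg at hcase
      have hεL : 1 + ε ≤ L := by linarith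
      obtain ⟨α, hαS, hαgt⟩ := exists_lt_of_lt_csSup hSne (show L - ε / 2 < L by linarith)
      have hαle : α ≤ L := le_csSup hbdd hαS
      obtain ⟨p, q, hp, hq, hαeq⟩ := hαS
      have hα1 : 1 < α := by linarith
      have hαpos : 0 < α := by linarith
      obtain ⟨δ, hδ0, hδ1, hδC⟩ := fk_exists_rpow_lt hLpos
        (show 1 < (L - ε / 2) / (L - ε) by rw [lt_div_iff₀ (by linarith)]; linarith)
      refine ⟨max (max (p + 2) (q + 2)) (max ⌈4 * ((p:ℝ) + 1) / δ⌉₊ ⌈4 * ((q:ℝ) + 1) / δ⌉₊),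
        fun m n hm hn => ?_⟩
      have hmp2 : p + 2 ≤ m := le_trans (le_trans (le_max_left _ _) (le_max_left _ _)) hm
      have hnq2 : q + 2 ≤ n := le_trans (le_trans (le_max_right _ _) (le_max_left _ _)) hn
      have hm1 : 1 ≤ m := by omega
      have hn1 : 1 ≤ n := by omega
      have hm0 : (0:ℝ) < m := by exact_mod_cast hm1
      have hn0 : (0:ℝ) < n := by exact_mod_cast hn1
      have hmδ : 4 * ((p:ℝ) + 1) ≤ δ * m := by
        have h := le_trans (le_trans (le_max_left _ _) (le_max_right _ _)) hm
        have h' : (4 * ((p:ℝ) + 1) / δ) ≤ (m:ℝ) := Nat.ceil_le.mp h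
        calc 4 * ((p:ℝ) + 1) = δ * (4 * ((p:ℝ) + 1) / δ) := by field_simp
          _ ≤ δ * m := mul_le_mul_of_nonneg_left h' hδ0.le
      have hnδ : 4 * ((q:ℝ) + 1) ≤ δ * n := by
        have h := le_trans (le_trans (le_max_right _ _) (le_max_right _ _)) hn
        have h' : (4 * ((q:ℝ) + 1) / δ) ≤ (n:ℝ) := Nat.ceil_le.mp h
        calc 4 * ((q:ℝ) + 1) = δ * (4 * ((q:ℝ) + 1) / δ) := by field_simp
          _ ≤ δ * n := mul_le_mul_of_nonneg_left h' hδ0.le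
      obtain ⟨k, l, hk1, hl1, hkm, hln, hkey⟩ := fk_key a h1 h2 h3 p q m n hp hq hmp2 hnq2
      have hapq1 : 1 ≤ a p q := h1 p q hp hq
      have hapq0 : 0 ≤ a p q := by linarith
      have hA : (a p q ^ (k * l)) ^ ((1:ℝ) / (m * n)) ≤ a m n ^ ((1:ℝ) / (m * n)) :=
        Real.rpow_le_rpow (by positivity) hkey (by positivity)
      have hB : (a p q ^ (k * l)) ^ ((1:ℝ) / (m * n)) =
          a p q ^ (((k:ℝ) * l) / ((m:ℝ) * n)) := by
        rw [← Real.rpow_natCast (a p q) (k * l), ← Real.rpow_mul hapq0]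
        congr 1
        push_cast
        ring
      have hC : a p q ^ (((k:ℝ) * l) / ((m:ℝ) * n)) =
          α ^ (((k:ℝ) * l * ((p:ℝ) + 1) * ((q:ℝ) + 1)) / ((m:ℝ) * n)) := by
        rw [hαeq, ← Real.rpow_mul hapq0]
        congr 1
        have hp0 : ((p:ℝ) + 1) ≠ 0 := by positivity
        have hq0 : ((q:ℝ) + 1) ≠ 0 := by positivity
        have hm0' : ((m:ℝ)) ≠ 0 := ne_of_gt hm0
        have hn0' : ((n:ℝ)) ≠ 0 := ne_of_gt hn0
        field_simp
      have hKcast : (m:ℝ) * (1 - δ / 2) ≤ (k:ℝ) * ((p:ℝ) + 1) := by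
        have h' : (m:ℝ) ≤ (k:ℝ) * ((p:ℝ) + 1) + 2 * ((p:ℝ) + 1) := by exact_mod_cast hkm
        nlinarith
      have hMcast : (n:ℝ) * (1 - δ / 2) ≤ (l:ℝ) * ((q:ℝ) + 1) := by
        have h' : (n:ℝ) ≤ (l:ℝ) * ((q:ℝ) + 1) + 2 * ((q:ℝ) + 1) := by exact_mod_cast hln
        nlinarith
      have hfac0 : (0:ℝ) ≤ 1 - δ / 2 := by linarith
      have hθ : 1 - δ ≤ ((k:ℝ) * l * ((p:ℝ) + 1) * ((q:ℝ) + 1)) / ((m:ℝ) * n) := by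
        rw [le_div_iff₀ (by positivity)]
        have hxnn : (0:ℝ) ≤ (k:ℝ) * ((p:ℝ) + 1) := by positivity
        have hynn : (0:ℝ) ≤ (n:ℝ) * (1 - δ / 2) := by positivity
        have hprod : ((m:ℝ) * (1 - δ / 2)) * ((n:ℝ) * (1 - δ / 2)) ≤
            ((k:ℝ) * ((p:ℝ) + 1)) * ((l:ℝ) * ((q:ℝ) + 1)) :=
          mul_le_mul hKcast hMcast hynn hxnn
        nlinarith [mul_nonneg (mul_nonneg (sq_nonneg δ) hm0.le) hn0.le]
      have hD : α ^ ((1:ℝ) - δ) ≤ α ^ (((k:ℝ) * l * ((p:ℝ) + 1) * ((q:ℝ) + 1)) / ((m:ℝ) * n)) :=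
        Real.rpow_le_rpow_of_exponent_le hα1.le hθ
      have hE : α ^ ((1:ℝ) - δ) = α / α ^ δ := by
        rw [Real.rpow_sub hαpos, Real.rpow_one]
      have hF : α ^ δ ≤ L ^ δ := Real.rpow_le_rpow hαpos.le hαle hδ0.le
      have hαδpos : 0 < α ^ δ := Real.rpow_pos_of_pos hαpos δ
      have hLδpos : 0 < L ^ δ := Real.rpow_pos_of_pos hLpos δ
      have hG : α / L ^ δ ≤ α / α ^ δ := by
        rw [div_le_div_iff₀ hLδpos hαδpos]
        exact mul_le_mul_of_nonneg_left hF hαpos.le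
      have hH : L - ε < α / L ^ δ := by
        rw [lt_div_iff₀ hLδpos]
        rw [lt_div_iff₀ (show (0:ℝ) < L - ε by linarith)] at hδC
        nlinarith
      calc L - ε < α / L ^ δ := hH
        _ ≤ α / α ^ δ := hG
        _ = α ^ ((1:ℝ) - δ) := hE.symm
        _ ≤ α ^ (((k:ℝ) * l * ((p:ℝ) + 1) * ((q:ℝ) + 1)) / ((m:ℝ) * n)) := hD
        _ = a p q ^ (((k:ℝ) * l) / ((m:ℝ) * n)) := hC.symm
        _ = (a p q ^ (k * l)) ^ ((1:ℝ) / (m * n)) := hB.symm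
        _ ≤ a m n ^ ((1:ℝ) / (m * n)) := hA
  obtain ⟨N₁, hN₁1, hup⟩ := hupper
  obtain ⟨N₂, hlo⟩ := hlower
  refine ⟨max N₁ N₂, fun m n hm hn => ?_⟩
  have h₁ := hup m n (le_trans (le_max_left _ _) hm) (le_trans (le_max_left _ _) hn)
  have h₂ := hlo m n (le_trans (le_max_right _ _) hm) (le_trans (le_max_right _ _) hn)
  rw [abs_lt]
  constructor <;> linarith
end
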